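/- Let A, B be positive definite n×n matrices and Z ∈ M_n(ℂ). Then for all s, t ∈ ℝ, λ₁(|A^{(s+t)/2} Z B^{(s+t)/2}|) ≤ λ₁(|A^t Z B^t|)^{1/2} · λ₁(|A^s Z B^s|)^{1/2}, i.e., t ↦ log λ₁(|A^t Z B^t|) is midpoint convex (hence convex by continuity). -/

import Mathlib

open Matrix ComplexOrder

/-- The absolute value `|M| = (Mᴴ M)^{1/2}` of a complex matrix. -/
noncomputable def matAbs {n : ℕ} (M : Matrix (Fin n) (Fin n) ℂ) : Matrix (Fin n) (Fin n) ℂ :=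
  (Matrix.posSemidef_conjTranspose_mul_self M).1.eigenvectorUnitary.1 *
    Matrix.diagonal ((↑) ∘ (√·) ∘ (Matrix.posSemidef_conjTranspose_mul_self M).1.eigenvalues) *
    (star (Matrix.posSemidef_conjTranspose_mul_self M).1.eigenvectorUnitary : Matrix (Fin n) (Fin n) ℂ)

theorem matAbs_posSemidef {n : ℕ} (M : Matrix (Fin n) (Fin n) ℂ) : (matAbs M).PosSemidef :=
  by
    unfold matAbs
    rw [Matrix.star_eq_conjTranspose]
    refine Matrix.PosSemidef.mul_mul_conjTranspose_same (Matrix.PosSemidef.diagonal ?_) _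
    intro i
    simp

/-- Eigenvalues of a Hermitian matrix arranged in decreasing order:
`eigDesc hM j` is the `j`-th largest eigenvalue. -/
noncomputable def eigDesc {n : ℕ} {M : Matrix (Fin n) (Fin n) ℂ} (hM : M.IsHermitian) :
    Fin n → ℝ :=
  fun i => hM.eigenvalues (Tuple.sort hM.eigenvalues i.rev)

/-- Eigenvalues of a Hermitian matrix arranged in increasing order. -/
noncomputable def eigAsc {n : ℕ} {M : Matrix (Fin n) (Fin n) ℂ} (hM : M.IsHermitian) :
    Fin n → ℝ :=
  fun i => hM.eigenvalues (Tuple.sort hM.eigenvalues i)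

/-- The largest eigenvalue of a Hermitian matrix. -/
noncomputable def maxEig {n : ℕ} {M : Matrix (Fin n) (Fin n) ℂ} (hM : M.IsHermitian) : ℝ :=
  ⨆ i, hM.eigenvalues i

/-- Real power `M^t` of a Hermitian matrix, via the spectral decomposition. -/
noncomputable def rpowH {n : ℕ} {M : Matrix (Fin n) (Fin n) ℂ} (hM : M.IsHermitian) (t : ℝ) :
    Matrix (Fin n) (Fin n) ℂ :=
  (hM.eigenvectorUnitary : Matrix (Fin n) (Fin n) ℂ) *
    Matrix.diagonal (fun i => ((hM.eigenvalues i ^ t : ℝ) : ℂ)) *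
    star (hM.eigenvectorUnitary : Matrix (Fin n) (Fin n) ℂ)

theorem rpowH_isHermitian {n : ℕ} {M : Matrix (Fin n) (Fin n) ℂ} (hM : M.IsHermitian) (t : ℝ) :
    (rpowH hM t).IsHermitian := by
  unfold rpowH
  unfold Matrix.IsHermitian
  simp [Matrix.conjTranspose_mul, Matrix.diagonal_conjTranspose, mul_assoc,
    Matrix.star_eq_conjTranspose]
  congr 2
  funext i
  simp [star]
  rfl

/-- The ℓ²→ℓ² operator norm of a complex matrix. -/
noncomputable def opN {n : ℕ} (M : Matrix (Fin n) (Fin n) ℂ) : ℝ :=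
  ‖Matrix.toEuclideanCLM (𝕜 := ℂ) M‖

section Aux

open scoped ENNReal NNReal

lemma aux_spectralRadius_mul_comm {𝕜 A : Type*} [NormedField 𝕜] [Ring A] [Algebra 𝕜 A]
    (a b : A) : spectralRadius 𝕜 (a * b) = spectralRadius 𝕜 (b * a) := by
  have key : ∀ x y : A, spectralRadius 𝕜 (x * y) ≤ spectralRadius 𝕜 (y * x) := by
    intro x y
    refine iSup₂_le fun k hk => ?_
    rcases eq_or_ne k 0 with rfl | h0
    · simp
    · have hk' : k ∈ spectrum 𝕜 (y * x) := by
        have hmem : k ∈ spectrum 𝕜 (x * y) \ {0} := ⟨hk, h0⟩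
        rw [spectrum.nonzero_mul_comm] at hmem
        exact hmem.1
      exact le_iSup₂ (f := fun k (_ : k ∈ spectrum 𝕜 (y * x)) => (‖k‖₊ : ℝ≥0∞)) k hk'
  exact le_antisymm (key a b) (key b a)

lemma aux_maxEig_eq_opN {n : ℕ} {P : Matrix (Fin n) (Fin n) ℂ} (hP : P.PosSemidef) :
    maxEig hP.1 = opN P := by
  rcases Nat.eq_zero_or_pos n with rfl | hn
  · haveI : IsEmpty (Fin 0) := inferInstance
    haveI : Subsingleton (EuclideanSpace ℂ (Fin 0)) :=
      ⟨fun a b => PiLp.ext fun i => Fin.elim0 i⟩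
    have h0 : Matrix.toEuclideanCLM (𝕜 := ℂ) P = 0 := by
      apply ContinuousLinearMap.ext
      intro x
      exact Subsingleton.elim _ _
    rw [maxEig, opN, h0, norm_zero, Real.iSup_of_isEmpty]
  · haveI : Nonempty (Fin n) := Fin.pos_iff_nonempty.mp hn
    obtain ⟨j, hj⟩ := Finite.exists_max hP.1.eigenvalues
    have hmax : maxEig hP.1 = hP.1.eigenvalues j :=
      le_antisymm (ciSup_le hj) (le_ciSup (Set.Finite.bddAbove (Set.finite_range _)) j)
    set T := Matrix.toEuclideanCLM (𝕜 := ℂ) P with hT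
    have hPs : star P = P := hP.1
    have hsa : _root_.IsSelfAdjoint T := by
      have h := congrArg (Matrix.toEuclideanCLM (𝕜 := ℂ)) hPs
      rwa [StarHomClass.map_star] at h
    have h1 : spectralRadius ℂ T = (‖T‖₊ : ℝ≥0∞) := hsa.spectralRadius_eq_nnnorm
    have h2 : spectrum ℂ T = spectrum ℂ P :=
      AlgEquiv.spectrum_eq (Matrix.toEuclideanCLM (𝕜 := ℂ) (n := Fin n)) P
    have hspec : spectrum ℂ P = Set.range (RCLike.ofReal ∘ hP.1.eigenvalues) := by
      conv_lhs => rw [hP.1.spectral_theorem]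
      rw [Unitary.conjStarAlgAut_apply, Unitary.spectrum_star_right_conjugate, spectrum_diagonal]
    have h3 : spectralRadius ℂ T = ⨆ i, (‖(RCLike.ofReal (hP.1.eigenvalues i) : ℂ)‖₊ : ℝ≥0∞) := by
      unfold spectralRadius
      rw [h2, hspec, iSup_range]
      simp [Function.comp]
    have h4 : (⨆ i, (‖(RCLike.ofReal (hP.1.eigenvalues i) : ℂ)‖₊ : ℝ≥0∞)) =
        (‖(RCLike.ofReal (hP.1.eigenvalues j) : ℂ)‖₊ : ℝ≥0∞) := by
      refine le_antisymm (iSup_le fun i => ?_)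
        (le_iSup (fun i => (‖(RCLike.ofReal (hP.1.eigenvalues i) : ℂ)‖₊ : ℝ≥0∞)) j)
      rw [ENNReal.coe_le_coe]
      have hi0 := hP.eigenvalues_nonneg i
      have hj0 := hP.eigenvalues_nonneg j
      have : ∀ (r : ℝ), ‖(RCLike.ofReal r : ℂ)‖₊ = ‖r‖₊ := fun r => by
        ext; simp
      rw [this, this, Real.nnnorm_of_nonneg hi0, Real.nnnorm_of_nonneg hj0]
      exact Subtype.mk_le_mk.mpr (hj i)
    have h5 : (‖T‖₊ : ℝ≥0∞) = (‖(RCLike.ofReal (hP.1.eigenvalues j) : ℂ)‖₊ : ℝ≥0∞) := by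
      rw [← h1, h3, h4]
    have h6 : ‖T‖ = hP.1.eigenvalues j := by
      have := ENNReal.coe_injective h5
      have h7 : ‖T‖ = ‖(RCLike.ofReal (hP.1.eigenvalues j) : ℂ)‖ := congrArg NNReal.toReal this
      rw [h7]
      simp [Complex.norm_real, abs_of_nonneg (hP.eigenvalues_nonneg j)]
    rw [hmax, opN, ← hT, h6]

lemma aux_opN_matAbs {n : ℕ} (M : Matrix (Fin n) (Fin n) ℂ) : opN (matAbs M) = opN M := by
  have habs : matAbs M * matAbs M = Mᴴ * M :=
    by
    have hU : (star ((Matrix.posSemidef_conjTranspose_mul_self M).1.eigenvectorUnitary : Matrix (Fin n) (Fin n) ℂ)) *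
        ((Matrix.posSemidef_conjTranspose_mul_self M).1.eigenvectorUnitary : Matrix (Fin n) (Fin n) ℂ) = 1 :=
      (Matrix.posSemidef_conjTranspose_mul_self M).1.eigenvectorUnitary.2.1
    conv_rhs => rw [(Matrix.posSemidef_conjTranspose_mul_self M).1.spectral_theorem, Unitary.conjStarAlgAut_apply]
    unfold matAbs
    simp only [Matrix.mul_assoc]
    rw [← Matrix.mul_assoc (star _) _ _, hU, Matrix.one_mul, ← Matrix.mul_assoc (diagonal _),
      diagonal_mul_diagonal]
    congr 3
    funext i
    simp only [Function.comp_apply, ← Complex.ofReal_mul]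
    rw [Real.mul_self_sqrt ((Matrix.posSemidef_conjTranspose_mul_self M).eigenvalues_nonneg i)]
    rfl
  have hherm : (matAbs M)ᴴ = matAbs M := (matAbs_posSemidef M).1
  have key : star (Matrix.toEuclideanCLM (𝕜 := ℂ) (matAbs M)) *
      Matrix.toEuclideanCLM (𝕜 := ℂ) (matAbs M) =
      star (Matrix.toEuclideanCLM (𝕜 := ℂ) M) * Matrix.toEuclideanCLM (𝕜 := ℂ) M := by
    rw [← StarHomClass.map_star, ← StarHomClass.map_star, ← MulHomClass.map_mul, ← MulHomClass.map_mul]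
    congr 1
    rw [Matrix.star_eq_conjTranspose, Matrix.star_eq_conjTranspose, hherm, habs]
  have h1 := CStarRing.norm_star_mul_self (x := Matrix.toEuclideanCLM (𝕜 := ℂ) (matAbs M))
  have h2 := CStarRing.norm_star_mul_self (x := Matrix.toEuclideanCLM (𝕜 := ℂ) M)
  rw [key, h2] at h1
  unfold opN
  exact (mul_self_inj_of_nonneg (norm_nonneg _) (norm_nonneg _)).mp h1.symm

lemma aux_maxEig_matAbs {n : ℕ} (M : Matrix (Fin n) (Fin n) ℂ) :
    maxEig (matAbs_posSemidef M).1 = opN M :=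
  (aux_maxEig_eq_opN (matAbs_posSemidef M)).trans (aux_opN_matAbs M)

lemma aux_rpowH_mul {n : ℕ} {A : Matrix (Fin n) (Fin n) ℂ} (hA : A.PosDef) (x y : ℝ) :
    rpowH hA.1 x * rpowH hA.1 y = rpowH hA.1 (x + y) := by
  unfold rpowH
  set U : Matrix (Fin n) (Fin n) ℂ := (hA.1.eigenvectorUnitary : Matrix (Fin n) (Fin n) ℂ)
    with hUdef
  have hU : star U * U = 1 := hA.1.eigenvectorUnitary.2.1
  have hUW : ∀ W : Matrix (Fin n) (Fin n) ℂ, star U * (U * W) = W := fun W => by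
    rw [← Matrix.mul_assoc, hU, Matrix.one_mul]
  have hd : Matrix.diagonal (fun i => ((hA.1.eigenvalues i ^ x : ℝ) : ℂ)) *
      Matrix.diagonal (fun i => ((hA.1.eigenvalues i ^ y : ℝ) : ℂ)) =
      Matrix.diagonal (fun i => ((hA.1.eigenvalues i ^ (x + y) : ℝ) : ℂ)) := by
    rw [Matrix.diagonal_mul_diagonal]
    have : (fun i => ((hA.1.eigenvalues i ^ x : ℝ) : ℂ) * ((hA.1.eigenvalues i ^ y : ℝ) : ℂ)) =
        fun i => ((hA.1.eigenvalues i ^ (x + y) : ℝ) : ℂ) := by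
      funext i
      rw [← Complex.ofReal_mul, ← Real.rpow_add (hA.eigenvalues_pos i)]
    rw [this]
  simp only [Matrix.mul_assoc]
  rw [hUW, ← Matrix.mul_assoc (Matrix.diagonal _), hd]

lemma aux_sr_clm {n : ℕ} (W : Matrix (Fin n) (Fin n) ℂ) :
    spectralRadius ℂ (Matrix.toEuclideanCLM (𝕜 := ℂ) W) = spectralRadius ℂ W := by
  unfold spectralRadius
  rw [AlgEquiv.spectrum_eq (Matrix.toEuclideanCLM (𝕜 := ℂ) (n := Fin n)) W]

lemma aux_real_final {a b c : ℝ} (ha : 0 ≤ a) (hb : 0 ≤ b) (hc : 0 ≤ c)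
    (h : a * a ≤ b * c) : a ≤ b ^ (1 / 2 : ℝ) * c ^ (1 / 2 : ℝ) := by
  rw [← Real.sqrt_eq_rpow, ← Real.sqrt_eq_rpow, ← Real.sqrt_mul hb c,
    ← Real.sqrt_mul_self ha]
  exact Real.sqrt_le_sqrt h

end Aux

open scoped ENNReal NNReal in
set_option maxHeartbeats 1000000 in
set_option synthInstance.maxHeartbeats 400000 in
theorem stmt_16 {n : ℕ} (A B Z : Matrix (Fin n) (Fin n) ℂ)
    (hA : A.PosDef) (hB : B.PosDef) :
    ∀ s t : ℝ,
      maxEig (matAbs_posSemidef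
          (rpowH hA.1 ((s + t) / 2) * Z * rpowH hB.1 ((s + t) / 2))).1 ≤
        maxEig (matAbs_posSemidef (rpowH hA.1 t * Z * rpowH hB.1 t)).1 ^ (1 / 2 : ℝ) *
          maxEig (matAbs_posSemidef (rpowH hA.1 s * Z * rpowH hB.1 s)).1 ^ (1 / 2 : ℝ) := by
  intro s t
  have e1 : maxEig (matAbs_posSemidef
      (rpowH hA.1 ((s + t) / 2) * Z * rpowH hB.1 ((s + t) / 2))).1 =
      opN (rpowH hA.1 ((s + t) / 2) * Z * rpowH hB.1 ((s + t) / 2)) := aux_maxEig_matAbs _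
  have e2 : maxEig (matAbs_posSemidef (rpowH hA.1 t * Z * rpowH hB.1 t)).1 =
      opN (rpowH hA.1 t * Z * rpowH hB.1 t) := aux_maxEig_matAbs _
  have e3 : maxEig (matAbs_posSemidef (rpowH hA.1 s * Z * rpowH hB.1 s)).1 =
      opN (rpowH hA.1 s * Z * rpowH hB.1 s) := aux_maxEig_matAbs _
  refine e1.trans_le (le_of_le_of_eq ?_
    (congrArg₂ (fun a b => a ^ (1 / 2 : ℝ) * b ^ (1 / 2 : ℝ)) e2.symm e3.symm))
  clear e1 e2 e3
  beta_reduce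
  rcases Nat.eq_zero_or_pos n with rfl | hn
  · haveI : Subsingleton (EuclideanSpace ℂ (Fin 0)) := ⟨fun a b => PiLp.ext fun i => Fin.elim0 i⟩
    have hz : ∀ M : Matrix (Fin 0) (Fin 0) ℂ, opN M = 0 := fun M => by
      have h0 : Matrix.toEuclideanCLM (𝕜 := ℂ) M = 0 :=
        ContinuousLinearMap.ext fun x => Subsingleton.elim _ _
      rw [opN, h0, norm_zero]
    rw [hz, hz, hz, Real.zero_rpow (by norm_num : (1/2 : ℝ) ≠ 0), zero_mul]
  · haveI : Nonempty (Fin n) := Fin.pos_iff_nonempty.mp hn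
    apply aux_real_final (norm_nonneg _) (norm_nonneg _) (norm_nonneg _)
    set X := rpowH hA.1 ((s+t)/2) * Z * rpowH hB.1 ((s+t)/2) with hX
    set Yt := rpowH hA.1 t * Z * rpowH hB.1 t with hYt
    set Ys := rpowH hA.1 s * Z * rpowH hB.1 s with hYs
    have gmul : ∀ (U V : Matrix (Fin n) (Fin n) ℂ),
        Matrix.toEuclideanCLM (𝕜 := ℂ) (U * V) =
        Matrix.toEuclideanCLM (𝕜 := ℂ) U * Matrix.toEuclideanCLM (𝕜 := ℂ) V :=
      fun U V => MulHomClass.map_mul _ U V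
    have gstar : ∀ (U : Matrix (Fin n) (Fin n) ℂ),
        Matrix.toEuclideanCLM (𝕜 := ℂ) (Uᴴ) = star (Matrix.toEuclideanCLM (𝕜 := ℂ) U) :=
      fun U => StarHomClass.map_star _ U
    -- C* identity step
    have e0 : spectralRadius ℂ (Xᴴ * X) =
        ((‖Matrix.toEuclideanCLM (𝕜 := ℂ) X‖₊ * ‖Matrix.toEuclideanCLM (𝕜 := ℂ) X‖₊ : ℝ≥0) :
          ENNReal) := by
      have h := (IsSelfAdjoint.star_mul_self
        (Matrix.toEuclideanCLM (𝕜 := ℂ) X)).spectralRadius_eq_nnnorm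
      rw [CStarRing.nnnorm_star_mul_self] at h
      rw [← gstar, ← gmul, aux_sr_clm] at h
      exact h
    -- matrix rearrangement 1
    have hA2 : rpowH hA.1 ((s+t)/2) * rpowH hA.1 ((s+t)/2) = rpowH hA.1 (s+t) := by
      rw [aux_rpowH_mul hA, add_halves]
    have hB2 : rpowH hB.1 ((s+t)/2) * rpowH hB.1 ((s+t)/2) = rpowH hB.1 (s+t) := by
      rw [aux_rpowH_mul hB, add_halves]
    have hAmH : (rpowH hA.1 ((s+t)/2))ᴴ = rpowH hA.1 ((s+t)/2) :=
      rpowH_isHermitian hA.1 ((s+t)/2)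
    have hBmH : (rpowH hB.1 ((s+t)/2))ᴴ = rpowH hB.1 ((s+t)/2) :=
      rpowH_isHermitian hB.1 ((s+t)/2)
    have hXX : Xᴴ * X = rpowH hB.1 ((s+t)/2) * ((Zᴴ * (rpowH hA.1 ((s+t)/2) *
        (rpowH hA.1 ((s+t)/2) * (Z * rpowH hB.1 ((s+t)/2)))))) := by
      rw [hX]
      simp only [Matrix.conjTranspose_mul, hAmH, hBmH, Matrix.mul_assoc]
    have sr1 : spectralRadius ℂ (Xᴴ * X) =
        spectralRadius ℂ (Zᴴ * (rpowH hA.1 (s+t) * (Z * rpowH hB.1 (s+t)))) := by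
      rw [hXX, aux_spectralRadius_mul_comm]
      refine congrArg (spectralRadius ℂ) ?_
      simp only [Matrix.mul_assoc]
      rw [← Matrix.mul_assoc (rpowH hA.1 ((s+t)/2)) (rpowH hA.1 ((s+t)/2)), hA2, hB2]
    have sr2 : spectralRadius ℂ (Zᴴ * (rpowH hA.1 (s+t) * (Z * rpowH hB.1 (s+t)))) =
        spectralRadius ℂ (Yt * Ysᴴ) := by
      have hAs : rpowH hA.1 (s+t) = rpowH hA.1 s * rpowH hA.1 t :=
        (aux_rpowH_mul hA s t).symm
      have hBs : rpowH hB.1 (s+t) = rpowH hB.1 t * rpowH hB.1 s := by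
        rw [add_comm s t]
        exact (aux_rpowH_mul hB t s).symm
      rw [hAs, hBs]
      have lhs_eq : Zᴴ * ((rpowH hA.1 s * rpowH hA.1 t) * (Z * (rpowH hB.1 t * rpowH hB.1 s))) =
          (Zᴴ * rpowH hA.1 s) * (rpowH hA.1 t * (Z * (rpowH hB.1 t * rpowH hB.1 s))) := by
        simp only [Matrix.mul_assoc]
      rw [lhs_eq, aux_spectralRadius_mul_comm]
      refine congrArg (spectralRadius ℂ) ?_
      have hAsH : (rpowH hA.1 s)ᴴ = rpowH hA.1 s := rpowH_isHermitian hA.1 s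
      have hBsH : (rpowH hB.1 s)ᴴ = rpowH hB.1 s := rpowH_isHermitian hB.1 s
      have hYsH : Ysᴴ = rpowH hB.1 s * (Zᴴ * rpowH hA.1 s) := by
        rw [hYs]
        simp only [Matrix.conjTranspose_mul, hAsH, hBsH, Matrix.mul_assoc]
      rw [hYt, hYsH]
      simp only [Matrix.mul_assoc]
    have sr3 : spectralRadius ℂ (Yt * Ysᴴ) ≤
        ((‖Matrix.toEuclideanCLM (𝕜 := ℂ) Yt‖₊ * ‖Matrix.toEuclideanCLM (𝕜 := ℂ) Ys‖₊ : ℝ≥0) :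
          ENNReal) := by
      rw [← aux_sr_clm]
      refine le_trans (spectrum.spectralRadius_le_nnnorm (𝕜 := ℂ) _) ?_
      rw [gmul, gstar]
      have := nnnorm_mul_le (Matrix.toEuclideanCLM (𝕜 := ℂ) Yt)
        (star (Matrix.toEuclideanCLM (𝕜 := ℂ) Ys))
      have hstar0 : ‖star (Matrix.toEuclideanCLM (𝕜 := ℂ) Ys)‖ =
          ‖Matrix.toEuclideanCLM (𝕜 := ℂ) Ys‖ := by
        rw [ContinuousLinearMap.star_eq_adjoint]
        exact LinearIsometryEquiv.norm_map _ _
      have hstar : ‖star (Matrix.toEuclideanCLM (𝕜 := ℂ) Ys)‖₊ =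
          ‖Matrix.toEuclideanCLM (𝕜 := ℂ) Ys‖₊ := NNReal.eq (by simpa using hstar0)
      rw [hstar] at this
      exact_mod_cast this
    have key : (‖Matrix.toEuclideanCLM (𝕜 := ℂ) X‖₊ * ‖Matrix.toEuclideanCLM (𝕜 := ℂ) X‖₊ : ℝ≥0)
        ≤ ‖Matrix.toEuclideanCLM (𝕜 := ℂ) Yt‖₊ * ‖Matrix.toEuclideanCLM (𝕜 := ℂ) Ys‖₊ := by
      have := sr3
      rw [← sr2, ← sr1, e0] at this
      exact_mod_cast this
    have key' := NNReal.coe_le_coe.mpr key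
    push_cast at key'
    exact key'
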